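/- Additive spectral decomposition: in the setting of the encoded pairwise cost function f (N registers, centered pairwise tables β_{i,j}, unary tables α_i, indicator polynomials x_{i,c}), define for each k ≥ 1 the degree-k spectral power P_k = ∑_{|S|=k} f̂(S)², the unary contribution P_k^{(i)} = ∑_{T ⊆ register i, |T|=k} (2^{−D_i} ∑_c α_i(c) ∏_{q∈T} s^{(i,c)}_q)², and the pairwise contribution P_k^{(i,j)} = ∑_{T_i,T_j nonempty, |T_i|+|T_j|=k} (2^{−(D_i+D_j)} ∑_{c_i,c_j} β_{i,j}(c_i,c_j) ∏_{q∈T_i} s^{(i,c_i)}_q ∏_{q∈T_j} s^{(j,c_j)}_q)². Then P_k = ∑_{i=1}^N P_k^{(i)} + ∑_{i<j} P_k^{(i,j)}; moreover P_k^{(i)} = 0 for k > D_i, and P_k^{(i,j)} = 0 for k ≤ 1 or k > D_i + D_j. -/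

import Mathlib

open Finset

/-- The Ising point of the hypercube `{−1,+1}^ι` corresponding to a bit vector. -/
noncomputable def toSign {ι : Type*} (b : ι → Bool) : ι → ℝ :=
  fun q => if b q then 1 else -1

/-- The Walsh coefficient `f̂(T) = E_z[f(z) χ_T(z)]` under the uniform measure on the
hypercube `{−1,+1}^ι`. -/
noncomputable def walshCoeff {ι : Type*} [Fintype ι] [DecidableEq ι]
    (f : (ι → ℝ) → ℝ) (T : Finset ι) : ℝ :=
  ((2 : ℝ) ^ Fintype.card ι)⁻¹ * ∑ b : ι → Bool, f (toSign b) * ∏ q ∈ T, toSign b q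

/-- The indicator polynomial `x_{i,c}(z_i) = 2^{−D_i} ∏_q (1 + s^{(i,c)}_q z_{i,q})`. -/
noncomputable def indicatorPoly {N : ℕ} (D m : Fin N → ℕ)
    (s : ∀ i, Fin (m i) → Fin (D i) → ℝ) (i : Fin N) (c : Fin (m i))
    (z : ((i : Fin N) × Fin (D i)) → ℝ) : ℝ :=
  ((2 : ℝ) ^ D i)⁻¹ * ∏ q : Fin (D i), (1 + s i c q * z ⟨i, q⟩)

/-- The exact-binary encoded pairwise cost function. -/
noncomputable def encodedF {N : ℕ} (D m : Fin N → ℕ)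
    (s : ∀ i, Fin (m i) → Fin (D i) → ℝ)
    (α : ∀ i, Fin (m i) → ℝ) (β : ∀ i j, Fin (m i) → Fin (m j) → ℝ)
    (z : ((i : Fin N) × Fin (D i)) → ℝ) : ℝ :=
  (∑ i : Fin N, ∑ c : Fin (m i), α i c * indicatorPoly D m s i c z) +
    ∑ i : Fin N, ∑ j : Fin N,
      if i < j then
        ∑ ci : Fin (m i), ∑ cj : Fin (m j),
          β i j ci cj * indicatorPoly D m s i ci z * indicatorPoly D m s j cj z
      else 0

/-- The degree-`k` spectral power `P_k = ∑_{|S|=k} f̂(S)²` of the encoded cost. -/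
noncomputable def specPower {N : ℕ} (D m : Fin N → ℕ)
    (s : ∀ i, Fin (m i) → Fin (D i) → ℝ)
    (α : ∀ i, Fin (m i) → ℝ) (β : ∀ i j, Fin (m i) → Fin (m j) → ℝ) (k : ℕ) : ℝ :=
  ∑ S ∈ Finset.univ.filter
      (fun S : Finset ((i : Fin N) × Fin (D i)) => S.card = k),
    (walshCoeff (encodedF D m s α β) S) ^ 2

/-- The unary degree-`k` spectral contribution `P_k^{(i)}`. -/
noncomputable def unaryPower {N : ℕ} (D m : Fin N → ℕ)
    (s : ∀ i, Fin (m i) → Fin (D i) → ℝ)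
    (α : ∀ i, Fin (m i) → ℝ) (i : Fin N) (k : ℕ) : ℝ :=
  ∑ T ∈ Finset.univ.filter (fun T : Finset (Fin (D i)) => T.card = k),
    (((2 : ℝ) ^ D i)⁻¹ * ∑ c : Fin (m i), α i c * ∏ q ∈ T, s i c q) ^ 2

/-- The pairwise bidegree-`k` spectral contribution `P_k^{(i,j)}`. -/
noncomputable def pairPower {N : ℕ} (D m : Fin N → ℕ)
    (s : ∀ i, Fin (m i) → Fin (D i) → ℝ)
    (β : ∀ i j, Fin (m i) → Fin (m j) → ℝ) (i j : Fin N) (k : ℕ) : ℝ :=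
  ∑ p ∈ Finset.univ.filter
      (fun p : Finset (Fin (D i)) × Finset (Fin (D j)) =>
        p.1.Nonempty ∧ p.2.Nonempty ∧ p.1.card + p.2.card = k),
    (((2 : ℝ) ^ (D i + D j))⁻¹ *
      ∑ ci : Fin (m i), ∑ cj : Fin (m j),
        β i j ci cj * (∏ q ∈ p.1, s i ci q) * ∏ q ∈ p.2, s j cj q) ^ 2


section walsh
variable {ι : Type*} [Fintype ι] [DecidableEq ι]

variable {ι : Type*} [Fintype ι] [DecidableEq ι]

lemma sum_chi (V : Finset ι) :
    ∑ b : ι → Bool, ∏ q ∈ V, toSign b q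
      = if V = ∅ then (2 : ℝ) ^ Fintype.card ι else 0 := by
  have key : ∀ b : ι → Bool, ∏ q ∈ V, toSign b q
      = ∏ q : ι, (if q ∈ V then toSign b q else 1) := by
    intro b
    rw [← Finset.prod_filter]
    congr 1
    simp [Finset.filter_mem_eq_inter]
  calc ∑ b : ι → Bool, ∏ q ∈ V, toSign b q
      = ∑ b ∈ Fintype.piFinset (fun _ : ι => (univ : Finset Bool)),
          ∏ q : ι, (if q ∈ V then toSign b q else 1) := by
        rw [Fintype.piFinset_univ]
        exact Finset.sum_congr rfl (fun b _ => key b)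
    _ = ∏ q : ι, ∑ x : Bool, (if q ∈ V then (if x then (1:ℝ) else -1) else 1) := by
        rw [Finset.prod_univ_sum]
        rfl
    _ = _ := by
        rcases eq_or_ne V ∅ with h | h
        · subst h; simp
        · rw [if_neg h]
          obtain ⟨q0, hq0⟩ := Finset.nonempty_iff_ne_empty.2 h
          apply Finset.prod_eq_zero (Finset.mem_univ q0)
          simp [hq0]

omit [Fintype ι] [DecidableEq ι] in
lemma toSign_sq (b : ι → Bool) (q : ι) : toSign b q * toSign b q = 1 := by
  unfold toSign; split <;> norm_num

omit [Fintype ι] in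
lemma chi_mul_chi (b : ι → Bool) (T U : Finset ι) :
    (∏ q ∈ T, toSign b q) * ∏ q ∈ U, toSign b q
      = ∏ q ∈ symmDiff T U, toSign b q := by
  have hT : (T \ U) ∪ (T ∩ U) = T := Finset.sdiff_union_inter T U
  have hU : (U \ T) ∪ (T ∩ U) = U := by
    rw [Finset.inter_comm]; exact Finset.sdiff_union_inter U T
  have d1 : Disjoint (T \ U) (T ∩ U) :=
    Finset.sdiff_disjoint.mono_right Finset.inter_subset_right
  have d2 : Disjoint (U \ T) (T ∩ U) := by
    rw [Finset.inter_comm]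
    exact Finset.sdiff_disjoint.mono_right Finset.inter_subset_right
  have d3 : Disjoint (T \ U) (U \ T) := disjoint_sdiff_sdiff
  have hc : (∏ q ∈ T ∩ U, toSign b q) * ∏ q ∈ T ∩ U, toSign b q = 1 := by
    rw [← Finset.prod_mul_distrib]
    exact Finset.prod_eq_one (fun q _ => toSign_sq b q)
  have e1 : (∏ q ∈ T, toSign b q)
      = (∏ q ∈ T \ U, toSign b q) * ∏ q ∈ T ∩ U, toSign b q := by
    rw [← Finset.prod_union d1, hT]
  have e2 : (∏ q ∈ U, toSign b q)
      = (∏ q ∈ U \ T, toSign b q) * ∏ q ∈ T ∩ U, toSign b q := by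
    rw [← Finset.prod_union d2, hU]
  have e3 : (∏ q ∈ symmDiff T U, toSign b q)
      = (∏ q ∈ T \ U, toSign b q) * ∏ q ∈ U \ T, toSign b q := by
    rw [symmDiff_def, Finset.sup_eq_union, Finset.prod_union d3]
  rw [e1, e2, e3]
  calc ((∏ q ∈ T \ U, toSign b q) * ∏ q ∈ T ∩ U, toSign b q) *
        ((∏ q ∈ U \ T, toSign b q) * ∏ q ∈ T ∩ U, toSign b q)
      = ((∏ q ∈ T \ U, toSign b q) * ∏ q ∈ U \ T, toSign b q) *
        ((∏ q ∈ T ∩ U, toSign b q) * ∏ q ∈ T ∩ U, toSign b q) := by ring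
    _ = _ := by rw [hc, mul_one]

lemma sum_chi_mul_chi (T U : Finset ι) :
    ∑ b : ι → Bool, (∏ q ∈ T, toSign b q) * ∏ q ∈ U, toSign b q
      = if T = U then (2 : ℝ) ^ Fintype.card ι else 0 := by
  rw [Finset.sum_congr rfl (fun b _ => chi_mul_chi b T U), sum_chi]
  by_cases h : T = U
  · subst h
    simp
  · rw [if_neg h, if_neg]
    intro hc
    exact h (by rwa [← Finset.bot_eq_empty, symmDiff_eq_bot] at hc)


lemma walshCoeff_expansion (W : Finset ι → ℝ) (T : Finset ι) :
    walshCoeff (fun z => ∑ S : Finset ι, W S * ∏ p ∈ S, z p) T = W T := by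
  unfold walshCoeff
  have : ∀ b : ι → Bool,
      (∑ S : Finset ι, W S * ∏ p ∈ S, toSign b p) * ∏ q ∈ T, toSign b q
        = ∑ S : Finset ι, W S * ((∏ p ∈ S, toSign b p) * ∏ q ∈ T, toSign b q) := by
    intro b
    rw [Finset.sum_mul]
    exact Finset.sum_congr rfl (fun S _ => by ring)
  rw [Finset.sum_congr rfl (fun b _ => this b), Finset.sum_comm]
  have : ∀ S : Finset ι,
      (∑ b : ι → Bool, W S * ((∏ p ∈ S, toSign b p) * ∏ q ∈ T, toSign b q))
        = W S * if S = T then (2 : ℝ) ^ Fintype.card ι else 0 := by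
    intro S
    rw [← Finset.mul_sum, sum_chi_mul_chi]
  rw [Finset.sum_congr rfl (fun S _ => this S)]
  have : (∑ S : Finset ι, W S * if S = T then (2:ℝ) ^ Fintype.card ι else 0)
      = W T * (2:ℝ) ^ Fintype.card ι := by
    rw [Finset.sum_congr rfl (fun S _ => mul_ite_zero ..)]
    exact Finset.sum_ite_eq' Finset.univ T (fun S => W S * (2:ℝ) ^ Fintype.card ι) |>.trans
      (by simp)
  rw [this]
  have h2 : ((2:ℝ) ^ Fintype.card ι) ≠ 0 := by positivity
  field_simp


end walsh

section helpers
variable {N : ℕ} {D : Fin N → ℕ}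

variable {N : ℕ} {D : Fin N → ℕ}

def emb (D : Fin N → ℕ) (i : Fin N) : Fin (D i) ↪ ((i : Fin N) × Fin (D i)) :=
  ⟨fun q => ⟨i, q⟩, fun a b h => eq_of_heq (Sigma.mk.inj_iff.1 h).2⟩

def part (D : Fin N → ℕ) (i : Fin N) (S : Finset ((i : Fin N) × Fin (D i))) :
    Finset (Fin (D i)) := univ.filter (fun q => (⟨i, q⟩ : (i : Fin N) × Fin (D i)) ∈ S)

lemma mem_part {i : Fin N} {S : Finset ((i : Fin N) × Fin (D i))} {q : Fin (D i)} :
    q ∈ part D i S ↔ (⟨i, q⟩ : (i : Fin N) × Fin (D i)) ∈ S := by simp [part]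

lemma mem_part_map {i : Fin N} {S : Finset ((i : Fin N) × Fin (D i))}
    {p : (i : Fin N) × Fin (D i)} :
    p ∈ (part D i S).map (emb D i) ↔ p ∈ S ∧ p.1 = i := by
  simp only [mem_map, mem_part, emb, Function.Embedding.coeFn_mk]
  constructor
  · rintro ⟨q, hq, rfl⟩; exact ⟨hq, rfl⟩
  · rintro ⟨hp, h1⟩
    obtain ⟨i', q⟩ := p
    cases h1
    exact ⟨q, hp, rfl⟩

lemma part_map_self (i : Fin N) (T : Finset (Fin (D i))) :
    part D i (T.map (emb D i)) = T := by
  ext q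
  simp only [mem_part, mem_map, emb, Function.Embedding.coeFn_mk]
  constructor
  · rintro ⟨a, ha, h⟩
    obtain ⟨-, h2⟩ := Sigma.mk.inj_iff.1 h
    rwa [← eq_of_heq h2]
  · exact fun h => ⟨q, h, rfl⟩

lemma part_map_ne {i j : Fin N} (hij : i ≠ j) (T : Finset (Fin (D j))) :
    part D i (T.map (emb D j)) = ∅ := by
  ext q
  simp only [mem_part, mem_map, emb, Function.Embedding.coeFn_mk, notMem_empty, iff_false]
  rintro ⟨a, -, h⟩
  exact hij ((Sigma.mk.inj_iff.1 h).1).symm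

lemma map_part_eq {i : Fin N} {S : Finset ((i : Fin N) × Fin (D i))}
    (h : ∀ p ∈ S, p.1 = i) : (part D i S).map (emb D i) = S := by
  ext p
  rw [mem_part_map]
  exact ⟨fun ⟨h1, _⟩ => h1, fun hp => ⟨hp, h _ hp⟩⟩

lemma card_part_eq {i : Fin N} {S : Finset ((i : Fin N) × Fin (D i))}
    (h : ∀ p ∈ S, p.1 = i) : (part D i S).card = S.card := by
  conv_rhs => rw [← map_part_eq h]
  simp

lemma part_union (i : Fin N) (S S' : Finset ((i : Fin N) × Fin (D i))) :
    part D i (S ∪ S') = part D i S ∪ part D i S' := by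
  ext q; simp [mem_part]

lemma part_union_map_left {i j : Fin N} (hij : i ≠ j) (Ti : Finset (Fin (D i)))
    (Tj : Finset (Fin (D j))) :
    part D i (Ti.map (emb D i) ∪ Tj.map (emb D j)) = Ti := by
  rw [part_union, part_map_self, part_map_ne hij, union_empty]

lemma part_union_map_right {i j : Fin N} (hij : i ≠ j) (Ti : Finset (Fin (D i)))
    (Tj : Finset (Fin (D j))) :
    part D j (Ti.map (emb D i) ∪ Tj.map (emb D j)) = Tj := by
  rw [part_union, part_map_ne hij.symm, part_map_self, empty_union]

lemma disjoint_map_emb {i j : Fin N} (hij : i ≠ j) (Ti : Finset (Fin (D i)))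
    (Tj : Finset (Fin (D j))) : Disjoint (Ti.map (emb D i)) (Tj.map (emb D j)) := by
  rw [Finset.disjoint_left]
  rintro p hpi hpj
  simp only [mem_map, emb, Function.Embedding.coeFn_mk] at hpi hpj
  obtain ⟨a, -, rfl⟩ := hpi
  obtain ⟨b, -, h⟩ := hpj
  exact hij ((Sigma.mk.inj_iff.1 h).1).symm

lemma map_part_union_eq {i j : Fin N} {S : Finset ((i : Fin N) × Fin (D i))}
    (h : ∀ p ∈ S, p.1 = i ∨ p.1 = j) :
    (part D i S).map (emb D i) ∪ (part D j S).map (emb D j) = S := by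
  ext p
  rw [Finset.mem_union, mem_part_map, mem_part_map]
  constructor
  · rintro (⟨hp, -⟩ | ⟨hp, -⟩) <;> exact hp
  · intro hp
    rcases h p hp with h1 | h1
    · exact Or.inl ⟨hp, h1⟩
    · exact Or.inr ⟨hp, h1⟩

/-- Reindexing a sum over subsets of one register. -/
lemma sum_reindex_one (i : Fin N) (g : Finset ((i : Fin N) × Fin (D i)) → ℝ) :
    ∑ T : Finset (Fin (D i)), g (T.map (emb D i))
      = ∑ S ∈ univ.filter
          (fun S : Finset ((i : Fin N) × Fin (D i)) => ∀ p ∈ S, p.1 = i), g S := by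
  apply Finset.sum_nbij' (fun T => T.map (emb D i)) (part D i)
  · intro T _
    simp only [mem_filter, mem_univ, true_and]
    intro p hp
    simp only [mem_map, emb, Function.Embedding.coeFn_mk] at hp
    obtain ⟨a, -, rfl⟩ := hp
    rfl
  · exact fun S _ => mem_univ _
  · exact fun T _ => part_map_self i T
  · intro S hS
    exact map_part_eq (by simpa using hS)
  · exact fun T _ => rfl

/-- Reindexing a sum over pairs of subsets of two registers. -/
lemma sum_reindex_two {i j : Fin N} (hij : i ≠ j)
    (g : Finset ((i : Fin N) × Fin (D i)) → ℝ) :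
    ∑ p : Finset (Fin (D i)) × Finset (Fin (D j)),
        g (p.1.map (emb D i) ∪ p.2.map (emb D j))
      = ∑ S ∈ univ.filter
          (fun S : Finset ((i : Fin N) × Fin (D i)) =>
            ∀ p ∈ S, p.1 = i ∨ p.1 = j), g S := by
  apply Finset.sum_nbij' (fun p => p.1.map (emb D i) ∪ p.2.map (emb D j))
    (fun S => (part D i S, part D j S))
  · intro p _
    simp only [mem_filter, mem_univ, true_and]
    intro q hq
    rcases Finset.mem_union.1 hq with h | h <;>
      simp only [mem_map, emb, Function.Embedding.coeFn_mk] at h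
    · obtain ⟨a, -, rfl⟩ := h; exact Or.inl rfl
    · obtain ⟨a, -, rfl⟩ := h; exact Or.inr rfl
  · exact fun S _ => mem_univ _
  · intro p _
    have h1 : part D i (p.1.map (emb D i) ∪ p.2.map (emb D j)) = p.1 := by
      rw [part_union, part_map_self, part_map_ne hij, union_empty]
    have h2 : part D j (p.1.map (emb D i) ∪ p.2.map (emb D j)) = p.2 := by
      rw [part_union, part_map_ne hij.symm, part_map_self, empty_union]
    exact Prod.ext h1 h2
  · intro S hS
    exact map_part_union_eq (by simpa using hS)
  · exact fun p _ => rfl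

/-- Multilinear expansion of the indicator polynomial. -/
lemma indicator_expand (m : Fin N → ℕ) (s : ∀ i, Fin (m i) → Fin (D i) → ℝ)
    (i : Fin N) (c : Fin (m i)) (z : ((i : Fin N) × Fin (D i)) → ℝ) :
    indicatorPoly D m s i c z
      = ∑ T : Finset (Fin (D i)),
          ((2 : ℝ) ^ D i)⁻¹ * (∏ q ∈ T, s i c q) * ∏ q ∈ T, z ⟨i, q⟩ := by
  unfold indicatorPoly
  have : ∏ q : Fin (D i), (1 + s i c q * z ⟨i, q⟩)
      = ∑ T : Finset (Fin (D i)), (∏ q ∈ T, s i c q * z ⟨i, q⟩) := by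
    rw [Finset.prod_congr rfl (fun q _ => add_comm 1 (s i c q * z ⟨i, q⟩)),
      Finset.prod_add]
    simp [Finset.powerset_univ]
  rw [this, Finset.mul_sum]
  exact Finset.sum_congr rfl (fun T _ => by rw [Finset.prod_mul_distrib, mul_assoc])


end helpers

section core
variable {N : ℕ} (D m : Fin N → ℕ) (s : ∀ i, Fin (m i) → Fin (D i) → ℝ)
  (α : ∀ i, Fin (m i) → ℝ) (β : ∀ i j, Fin (m i) → Fin (m j) → ℝ)

/-- unary Walsh coefficient -/
noncomputable def Acoef (i : Fin N) (T : Finset (Fin (D i))) : ℝ :=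
  ((2 : ℝ) ^ D i)⁻¹ * ∑ c : Fin (m i), α i c * ∏ q ∈ T, s i c q

/-- pairwise Walsh coefficient -/
noncomputable def Bcoef (i j : Fin N) (Ti : Finset (Fin (D i))) (Tj : Finset (Fin (D j))) : ℝ :=
  ((2 : ℝ) ^ (D i + D j))⁻¹ *
    ∑ ci : Fin (m i), ∑ cj : Fin (m j),
      β i j ci cj * (∏ q ∈ Ti, s i ci q) * ∏ q ∈ Tj, s j cj q

/-- the full Walsh coefficient function of `encodedF` -/
noncomputable def WC (S : Finset ((i : Fin N) × Fin (D i))) : ℝ :=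
  (∑ i : Fin N, if ∀ p ∈ S, p.1 = i then Acoef D m s α i (part D i S) else 0)
  + ∑ i : Fin N, ∑ j : Fin N,
      if i < j then
        (if ∀ p ∈ S, p.1 = i ∨ p.1 = j then
          Bcoef D m s β i j (part D i S) (part D j S) else 0)
      else 0

lemma unary_expand (i : Fin N) (z : ((i : Fin N) × Fin (D i)) → ℝ) :
    ∑ c : Fin (m i), α i c * indicatorPoly D m s i c z
      = ∑ S : Finset ((i : Fin N) × Fin (D i)),
          (if ∀ p ∈ S, p.1 = i then Acoef D m s α i (part D i S) else 0) * ∏ p ∈ S, z p := by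
  have h1 : ∀ c, α i c * indicatorPoly D m s i c z
      = ∑ T : Finset (Fin (D i)),
          α i c * (((2:ℝ) ^ D i)⁻¹ * (∏ q ∈ T, s i c q) * ∏ q ∈ T, z ⟨i, q⟩) := fun c => by
    rw [indicator_expand, Finset.mul_sum]
  rw [Finset.sum_congr rfl (fun c _ => h1 c), Finset.sum_comm]
  have h2 : ∀ T : Finset (Fin (D i)),
      ∑ c : Fin (m i), α i c * (((2:ℝ) ^ D i)⁻¹ * (∏ q ∈ T, s i c q) * ∏ q ∈ T, z ⟨i, q⟩)
        = (fun S : Finset ((i : Fin N) × Fin (D i)) =>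
            Acoef D m s α i (part D i S) * ∏ p ∈ S, z p) (T.map (emb D i)) := by
    intro T
    simp only [part_map_self]
    rw [Finset.prod_map]
    unfold Acoef
    simp only [emb, Function.Embedding.coeFn_mk]
    rw [Finset.mul_sum, Finset.sum_mul]
    exact Finset.sum_congr rfl fun c _ => by ring_nf; rfl
  rw [Finset.sum_congr rfl (fun T _ => h2 T),
    sum_reindex_one i (fun S => Acoef D m s α i (part D i S) * ∏ p ∈ S, z p),
    Finset.sum_filter]
  exact Finset.sum_congr rfl (fun S _ => by rw [ite_mul, zero_mul])

lemma pair_expand {i j : Fin N} (hij : i ≠ j) (z : ((i : Fin N) × Fin (D i)) → ℝ) :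
    ∑ ci : Fin (m i), ∑ cj : Fin (m j),
        β i j ci cj * indicatorPoly D m s i ci z * indicatorPoly D m s j cj z
      = ∑ S : Finset ((i : Fin N) × Fin (D i)),
          (if ∀ p ∈ S, p.1 = i ∨ p.1 = j then
            Bcoef D m s β i j (part D i S) (part D j S) else 0) * ∏ p ∈ S, z p := by
  have h1 : ∀ ci cj, β i j ci cj * indicatorPoly D m s i ci z * indicatorPoly D m s j cj z
      = ∑ T : Finset (Fin (D i)) × Finset (Fin (D j)),
          β i j ci cj * (((2:ℝ) ^ D i)⁻¹ * (∏ q ∈ T.1, s i ci q) * ∏ q ∈ T.1, z ⟨i, q⟩)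
            * (((2:ℝ) ^ D j)⁻¹ * (∏ q ∈ T.2, s j cj q) * ∏ q ∈ T.2, z ⟨j, q⟩) := by
    intro ci cj
    rw [indicator_expand, indicator_expand, Fintype.sum_prod_type]
    simp only [Finset.mul_sum, Finset.sum_mul]
    exact Finset.sum_comm
  calc ∑ ci : Fin (m i), ∑ cj : Fin (m j),
        β i j ci cj * indicatorPoly D m s i ci z * indicatorPoly D m s j cj z
      = ∑ c : Fin (m i) × Fin (m j), ∑ T : Finset (Fin (D i)) × Finset (Fin (D j)),
          β i j c.1 c.2 * (((2:ℝ) ^ D i)⁻¹ * (∏ q ∈ T.1, s i c.1 q) * ∏ q ∈ T.1, z ⟨i, q⟩)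
            * (((2:ℝ) ^ D j)⁻¹ * (∏ q ∈ T.2, s j c.2 q) * ∏ q ∈ T.2, z ⟨j, q⟩) := by
        rw [Fintype.sum_prod_type]
        exact Finset.sum_congr rfl fun ci _ => Finset.sum_congr rfl fun cj _ => h1 ci cj
    _ = ∑ T : Finset (Fin (D i)) × Finset (Fin (D j)),
          Bcoef D m s β i j T.1 T.2 * ((∏ q ∈ T.1, z ⟨i, q⟩) * ∏ q ∈ T.2, z ⟨j, q⟩) := by
        rw [Finset.sum_comm]
        refine Finset.sum_congr rfl fun T _ => ?_
        unfold Bcoef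
        rw [pow_add, mul_inv, Fintype.sum_prod_type, Finset.mul_sum, Finset.sum_mul]
        refine Finset.sum_congr rfl fun ci _ => ?_
        rw [Finset.mul_sum, Finset.sum_mul]
        refine Finset.sum_congr rfl fun cj _ => ?_
        show β i j ci cj * ((((2:ℝ) ^ D i)⁻¹ * ∏ q ∈ T.1, s i ci q) * ∏ q ∈ T.1, z ⟨i, q⟩) *
              ((((2:ℝ) ^ D j)⁻¹ * ∏ q ∈ T.2, s j cj q) * ∏ q ∈ T.2, z ⟨j, q⟩) = _
        ring
    _ = ∑ T : Finset (Fin (D i)) × Finset (Fin (D j)),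
          (fun S : Finset ((i : Fin N) × Fin (D i)) =>
            Bcoef D m s β i j (part D i S) (part D j S) * ∏ p ∈ S, z p)
            (T.1.map (emb D i) ∪ T.2.map (emb D j)) := by
        refine Finset.sum_congr rfl fun T _ => ?_
        simp only [part_union_map_left hij, part_union_map_right hij]
        rw [Finset.prod_union (disjoint_map_emb hij T.1 T.2), Finset.prod_map,
          Finset.prod_map]
        rfl
    _ = _ := by
        rw [sum_reindex_two hij
            (fun S => Bcoef D m s β i j (part D i S) (part D j S) * ∏ p ∈ S, z p),
          Finset.sum_filter]
        exact Finset.sum_congr rfl (fun S _ => by rw [ite_mul, zero_mul])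

lemma encodedF_eq (z : ((i : Fin N) × Fin (D i)) → ℝ) :
    encodedF D m s α β z
      = ∑ S : Finset ((i : Fin N) × Fin (D i)), WC D m s α β S * ∏ p ∈ S, z p := by
  unfold encodedF WC
  have hu : ∑ i : Fin N, ∑ c : Fin (m i), α i c * indicatorPoly D m s i c z
      = ∑ S : Finset ((i : Fin N) × Fin (D i)),
          (∑ i : Fin N, if ∀ p ∈ S, p.1 = i then Acoef D m s α i (part D i S) else 0)
            * ∏ p ∈ S, z p := by
    rw [Finset.sum_congr rfl (fun i _ => unary_expand D m s α i z), Finset.sum_comm]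
    exact Finset.sum_congr rfl fun S _ => by rw [Finset.sum_mul]
  have hp : ∑ i : Fin N, ∑ j : Fin N,
        (if i < j then
          ∑ ci : Fin (m i), ∑ cj : Fin (m j),
            β i j ci cj * indicatorPoly D m s i ci z * indicatorPoly D m s j cj z
        else 0)
      = ∑ S : Finset ((i : Fin N) × Fin (D i)),
          (∑ i : Fin N, ∑ j : Fin N,
            if i < j then
              (if ∀ p ∈ S, p.1 = i ∨ p.1 = j then
                Bcoef D m s β i j (part D i S) (part D j S) else 0)
            else 0) * ∏ p ∈ S, z p := by
    have step : ∀ i j : Fin N,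
        (if i < j then
          ∑ ci : Fin (m i), ∑ cj : Fin (m j),
            β i j ci cj * indicatorPoly D m s i ci z * indicatorPoly D m s j cj z
        else 0)
        = ∑ S : Finset ((i : Fin N) × Fin (D i)),
            (if i < j then
              (if ∀ p ∈ S, p.1 = i ∨ p.1 = j then
                Bcoef D m s β i j (part D i S) (part D j S) else 0)
            else 0) * ∏ p ∈ S, z p := by
      intro i j
      by_cases h : i < j
      · rw [if_pos h, pair_expand D m s β (ne_of_lt h) z]
        exact Finset.sum_congr rfl fun S _ => by rw [if_pos h]
      · rw [if_neg h]
        symm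
        refine Finset.sum_eq_zero fun S _ => by rw [if_neg h, zero_mul]
    rw [Finset.sum_congr rfl (fun i _ => Finset.sum_congr rfl (fun j _ => step i j))]
    rw [Finset.sum_congr rfl (fun i (_ : i ∈ univ) => Finset.sum_comm), Finset.sum_comm]
    refine Finset.sum_congr rfl fun S _ => ?_
    rw [Finset.sum_mul]
    exact Finset.sum_congr rfl fun i _ => by rw [Finset.sum_mul]
  rw [hu, hp, ← Finset.sum_add_distrib]
  exact Finset.sum_congr rfl fun S _ => by rw [add_mul]

lemma Bcoef_empty_right {i j : Fin N}
    (hrow : ∀ ci : Fin (m i), ∑ cj : Fin (m j), β i j ci cj = 0)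
    (Ti : Finset (Fin (D i))) :
    Bcoef D m s β i j Ti (∅ : Finset (Fin (D j))) = 0 := by
  unfold Bcoef
  rw [mul_eq_zero]
  right
  refine Finset.sum_eq_zero fun ci _ => ?_
  simp only [Finset.prod_empty, mul_one]
  rw [← Finset.sum_mul, hrow ci, zero_mul]

lemma Bcoef_empty_left {i j : Fin N}
    (hcol : ∀ cj : Fin (m j), ∑ ci : Fin (m i), β i j ci cj = 0)
    (Tj : Finset (Fin (D j))) :
    Bcoef D m s β i j (∅ : Finset (Fin (D i))) Tj = 0 := by
  unfold Bcoef
  rw [mul_eq_zero]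
  right
  rw [Finset.sum_comm]
  refine Finset.sum_eq_zero fun cj _ => ?_
  simp only [Finset.prod_empty, mul_one]
  rw [← Finset.sum_mul, hcol cj, zero_mul]

lemma uniq1 {S : Finset ((i : Fin N) × Fin (D i))} (hS : S.Nonempty)
    {i i' : Fin N} (h : ∀ p ∈ S, p.1 = i) (h' : ∀ p ∈ S, p.1 = i') : i = i' := by
  obtain ⟨p, hp⟩ := hS
  rw [← h p hp, h' p hp]

lemma part_reg {S : Finset ((i : Fin N) × Fin (D i))} {i i' : Fin N}
    (h : ∀ p ∈ S, p.1 = i) (h' : (part D i' S).Nonempty) : i' = i := by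
  obtain ⟨q, hq⟩ := h'
  rw [mem_part] at hq
  exact h _ hq

lemma not12 {S : Finset ((i : Fin N) × Fin (D i))} {i i' j' : Fin N}
    (h : ∀ p ∈ S, p.1 = i) (hlt : i' < j')
    (h1 : (part D i' S).Nonempty) (h2 : (part D j' S).Nonempty) : False := by
  have e1 := part_reg (D := D) h h1
  have e2 := part_reg (D := D) h h2
  rw [← e2] at e1
  exact absurd e1 (ne_of_lt hlt)

lemma uniq2 {S : Finset ((i : Fin N) × Fin (D i))} {i j i' j' : Fin N}
    (hij : i < j) (hij' : i' < j')
    (h : ∀ p ∈ S, p.1 = i ∨ p.1 = j)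
    (h1 : (part D i' S).Nonempty) (h2 : (part D j' S).Nonempty)
    (h' : ∀ p ∈ S, p.1 = i' ∨ p.1 = j')
    (g1 : (part D i S).Nonempty) (g2 : (part D j S).Nonempty) :
    i = i' ∧ j = j' := by
  have mem_cases : ∀ a : Fin N, (part D a S).Nonempty → a = i' ∨ a = j' := by
    intro a ⟨q, hq⟩
    rw [mem_part] at hq
    exact h' _ hq
  have mem_cases' : ∀ a : Fin N, (part D a S).Nonempty → a = i ∨ a = j := by
    intro a ⟨q, hq⟩
    rw [mem_part] at hq
    exact h _ hq
  have ci := mem_cases i g1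
  have cj := mem_cases j g2
  have ci' := mem_cases' i' h1
  have cj' := mem_cases' j' h2
  rcases ci with e | e <;> rcases cj with f | f
  · exact absurd (e.trans f.symm) (ne_of_lt hij)
  · exact ⟨e, f⟩
  · have h5 : j' < i' := by rw [← e, ← f]; exact hij
    exact absurd (h5.trans hij') (lt_irrefl _)
  · exact absurd (e.trans f.symm) (ne_of_lt hij)

/-- `WC` with nonemptiness conditions added to the pairwise indicators (valid under
the centering hypotheses). -/
lemma WC_eq_parts
    (hrow : ∀ i j, i < j → ∀ ci : Fin (m i), ∑ cj : Fin (m j), β i j ci cj = 0)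
    (hcol : ∀ i j, i < j → ∀ cj : Fin (m j), ∑ ci : Fin (m i), β i j ci cj = 0)
    (S : Finset ((i : Fin N) × Fin (D i))) :
    WC D m s α β S
      = (∑ i : Fin N, if ∀ p ∈ S, p.1 = i then Acoef D m s α i (part D i S) else 0)
        + ∑ i : Fin N, ∑ j : Fin N,
            if i < j then
              (if (∀ p ∈ S, p.1 = i ∨ p.1 = j) ∧ (part D i S).Nonempty ∧
                  (part D j S).Nonempty then
                Bcoef D m s β i j (part D i S) (part D j S) else 0)
            else 0 := by
  unfold WC
  refine congrArg₂ (· + ·) rfl ?_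
  refine Finset.sum_congr rfl fun i _ => Finset.sum_congr rfl fun j _ => ?_
  by_cases hij : i < j
  · rw [if_pos hij, if_pos hij]
    by_cases hall : ∀ p ∈ S, p.1 = i ∨ p.1 = j
    · rw [if_pos hall]
      by_cases hne1 : (part D i S).Nonempty
      · by_cases hne2 : (part D j S).Nonempty
        · rw [if_pos ⟨hall, hne1, hne2⟩]
        · have hz : Bcoef D m s β i j (part D i S) (part D j S) = 0 := by
            rw [Finset.not_nonempty_iff_eq_empty.1 hne2]
            exact Bcoef_empty_right D m s β (hrow i j hij) _
          rw [if_neg (fun h => hne2 h.2.2), hz]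
      · have hz : Bcoef D m s β i j (part D i S) (part D j S) = 0 := by
          rw [Finset.not_nonempty_iff_eq_empty.1 hne1]
          exact Bcoef_empty_left D m s β (hcol i j hij) _
        rw [if_neg (fun h => hne1 h.2.1), hz]
    · rw [if_neg hall, if_neg (fun h => hall h.1)]
  · rw [if_neg hij, if_neg hij]

lemma WC_sq
    (hrow : ∀ i j, i < j → ∀ ci : Fin (m i), ∑ cj : Fin (m j), β i j ci cj = 0)
    (hcol : ∀ i j, i < j → ∀ cj : Fin (m j), ∑ ci : Fin (m i), β i j ci cj = 0)
    (S : Finset ((i : Fin N) × Fin (D i))) (hS : S.Nonempty) :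
    WC D m s α β S ^ 2
      = (∑ i : Fin N, if ∀ p ∈ S, p.1 = i then Acoef D m s α i (part D i S) ^ 2 else 0)
        + ∑ i : Fin N, ∑ j : Fin N,
            if i < j then
              (if (∀ p ∈ S, p.1 = i ∨ p.1 = j) ∧ (part D i S).Nonempty ∧
                  (part D j S).Nonempty then
                Bcoef D m s β i j (part D i S) (part D j S) ^ 2 else 0)
            else 0 := by
  rw [WC_eq_parts D m s α β hrow hcol S]
  by_cases hA : ∃ i0, ∀ p ∈ S, p.1 = i0
  · obtain ⟨i0, h0⟩ := hA
    have hpair0 : ∀ F : (i j : Fin N) → ℝ,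
        (∑ i : Fin N, ∑ j : Fin N,
          if i < j then
            (if (∀ p ∈ S, p.1 = i ∨ p.1 = j) ∧ (part D i S).Nonempty ∧
                (part D j S).Nonempty then F i j else 0)
          else 0) = 0 := by
      intro F
      refine Finset.sum_eq_zero fun i _ => Finset.sum_eq_zero fun j _ => ?_
      by_cases hij : i < j
      · rw [if_pos hij, if_neg]
        rintro ⟨-, hne1, hne2⟩
        exact not12 (D := D) h0 hij hne1 hne2
      · rw [if_neg hij]
    rw [hpair0 _, hpair0 _, add_zero, add_zero]
    have key : ∀ G : (i : Fin N) → ℝ,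
        (∑ i : Fin N, if ∀ p ∈ S, p.1 = i then G i else 0) = G i0 := by
      intro G
      rw [Finset.sum_eq_single_of_mem i0 (Finset.mem_univ i0)
        (fun i _ hne => if_neg (fun h => hne (uniq1 (D := D) hS h h0))), if_pos h0]
    rw [key _, key _]
  · push_neg at hA
    have huni0 : ∀ G : (i : Fin N) → ℝ,
        (∑ i : Fin N, if ∀ p ∈ S, p.1 = i then G i else 0) = 0 := by
      intro G
      refine Finset.sum_eq_zero fun i _ => ?_
      obtain ⟨p, hp, hne⟩ := hA i
      exact if_neg (fun h => hne (h p hp))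
    rw [huni0 _, huni0 _, zero_add, zero_add]
    by_cases hB : ∃ p0 : Fin N × Fin N, p0.1 < p0.2 ∧ (∀ p ∈ S, p.1 = p0.1 ∨ p.1 = p0.2)
        ∧ (part D p0.1 S).Nonempty ∧ (part D p0.2 S).Nonempty
    · obtain ⟨⟨i0, j0⟩, hlt, hall, hne1, hne2⟩ := hB
      have key : ∀ F : (i j : Fin N) → ℝ,
          (∑ i : Fin N, ∑ j : Fin N,
            if i < j then
              (if (∀ p ∈ S, p.1 = i ∨ p.1 = j) ∧ (part D i S).Nonempty ∧
                  (part D j S).Nonempty then F i j else 0)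
            else 0) = F i0 j0 := by
        intro F
        have e := (Fintype.sum_prod_type (fun p : Fin N × Fin N =>
          if p.1 < p.2 then
            (if (∀ q ∈ S, q.1 = p.1 ∨ q.1 = p.2) ∧ (part D p.1 S).Nonempty ∧
                (part D p.2 S).Nonempty then F p.1 p.2 else 0)
          else 0)).symm
        refine Eq.trans e ?_
        rw [Finset.sum_eq_single_of_mem (i0, j0) (Finset.mem_univ _)]
        · rw [if_pos hlt, if_pos ⟨hall, hne1, hne2⟩]
        · rintro ⟨i, j⟩ - hne
          by_cases hij : i < j
          · rw [if_pos hij, if_neg]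
            rintro ⟨hall', hne1', hne2'⟩
            obtain ⟨e1, e2⟩ := uniq2 (D := D) hij hlt hall' hne1 hne2 hall hne1' hne2'
            exact hne (by rw [e1, e2])
          · rw [if_neg hij]
      rw [key _, key _]
    · push_neg at hB
      have key : ∀ F : (i j : Fin N) → ℝ,
          (∑ i : Fin N, ∑ j : Fin N,
            if i < j then
              (if (∀ p ∈ S, p.1 = i ∨ p.1 = j) ∧ (part D i S).Nonempty ∧
                  (part D j S).Nonempty then F i j else 0)
            else 0) = 0 := by
        intro F
        refine Finset.sum_eq_zero fun i _ => Finset.sum_eq_zero fun j _ => ?_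
        by_cases hij : i < j
        · rw [if_pos hij, if_neg]
          rintro ⟨hall, hne1, hne2⟩
          exact absurd hne2 (by simpa using hB (i, j) hij hall hne1)
        · rw [if_neg hij]
      rw [key _, key _]
      norm_num

lemma unary_sum (i : Fin N) (k : ℕ) :
    ∑ S ∈ univ.filter (fun S : Finset ((i : Fin N) × Fin (D i)) => S.card = k),
        (if ∀ p ∈ S, p.1 = i then Acoef D m s α i (part D i S) ^ 2 else 0)
      = unaryPower D m s α i k := by
  rw [← Finset.sum_filter]
  unfold unaryPower
  apply Finset.sum_nbij' (fun S => part D i S) (fun T => T.map (emb D i))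
  · intro S hS
    simp only [Finset.mem_filter, Finset.mem_univ, true_and] at hS ⊢
    rw [card_part_eq hS.2]
    exact hS.1
  · intro T hT
    simp only [Finset.mem_filter, Finset.mem_univ, true_and] at hT ⊢
    refine ⟨by rw [Finset.card_map]; exact hT, ?_⟩
    intro p hp
    simp only [Finset.mem_map, emb, Function.Embedding.coeFn_mk] at hp
    obtain ⟨q, -, rfl⟩ := hp
    rfl
  · intro S hS
    simp only [Finset.mem_filter, Finset.mem_univ, true_and] at hS
    exact map_part_eq hS.2
  · exact fun T _ => part_map_self i T
  · intro S _
    rfl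

lemma pair_sum {i j : Fin N} (hij : i < j) (k : ℕ) :
    ∑ S ∈ univ.filter (fun S : Finset ((i : Fin N) × Fin (D i)) => S.card = k),
        (if (∀ p ∈ S, p.1 = i ∨ p.1 = j) ∧ (part D i S).Nonempty ∧
            (part D j S).Nonempty then
          Bcoef D m s β i j (part D i S) (part D j S) ^ 2 else 0)
      = pairPower D m s β i j k := by
  have hne : i ≠ j := ne_of_lt hij
  rw [← Finset.sum_filter]
  unfold pairPower
  apply Finset.sum_nbij' (fun S => (part D i S, part D j S))
    (fun p => p.1.map (emb D i) ∪ p.2.map (emb D j))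
  · intro S hS
    simp only [Finset.mem_filter, Finset.mem_univ, true_and] at hS ⊢
    obtain ⟨hcard, hall, hne1, hne2⟩ := hS
    refine ⟨hne1, hne2, ?_⟩
    have hU : (part D i S).map (emb D i) ∪ (part D j S).map (emb D j) = S :=
      map_part_union_eq hall
    have := congrArg Finset.card hU
    rw [Finset.card_union_of_disjoint (disjoint_map_emb hne _ _), Finset.card_map,
      Finset.card_map] at this
    rw [this, hcard]
  · intro p hp
    simp only [Finset.mem_filter, Finset.mem_univ, true_and] at hp ⊢
    obtain ⟨hne1, hne2, hcard⟩ := hp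
    refine ⟨?_, ?_, ?_, ?_⟩
    · rw [Finset.card_union_of_disjoint (disjoint_map_emb hne _ _), Finset.card_map,
        Finset.card_map]
      exact hcard
    · intro q hq
      rcases Finset.mem_union.1 hq with h | h <;>
        simp only [Finset.mem_map, emb, Function.Embedding.coeFn_mk] at h
      · obtain ⟨a, -, rfl⟩ := h; exact Or.inl rfl
      · obtain ⟨a, -, rfl⟩ := h; exact Or.inr rfl
    · rw [part_union_map_left hne]
      exact hne1
    · rw [part_union_map_right hne]
      exact hne2
  · intro S hS
    simp only [Finset.mem_filter, Finset.mem_univ, true_and] at hS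
    exact map_part_union_eq hS.2.1
  · intro p _
    exact Prod.ext (part_union_map_left hne _ _) (part_union_map_right hne _ _)
  · intro S _
    rfl

lemma unary_vanish (i : Fin N) (k : ℕ) (h : D i < k) : unaryPower D m s α i k = 0 := by
  refine Finset.sum_eq_zero fun T hT => ?_
  rw [Finset.mem_filter] at hT
  exfalso
  have := Finset.card_le_univ T
  rw [Fintype.card_fin] at this
  omega

lemma pair_vanish (i j : Fin N) (k : ℕ) (h : k ≤ 1 ∨ D i + D j < k) :
    pairPower D m s β i j k = 0 := by
  refine Finset.sum_eq_zero fun p hp => ?_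
  rw [Finset.mem_filter] at hp
  obtain ⟨-, hne1, hne2, hcard⟩ := hp
  exfalso
  have h1 : 1 ≤ p.1.card := hne1.card_pos
  have h2 : 1 ≤ p.2.card := hne2.card_pos
  have hb1 := Finset.card_le_univ p.1
  have hb2 := Finset.card_le_univ p.2
  rw [Fintype.card_fin] at hb1
  rw [Fintype.card_fin] at hb2
  omega

lemma walshCoeff_encodedF (S : Finset ((i : Fin N) × Fin (D i))) :
    walshCoeff (encodedF D m s α β) S = WC D m s α β S := by
  have : encodedF D m s α β = fun z =>
      ∑ T : Finset ((i : Fin N) × Fin (D i)), WC D m s α β T * ∏ p ∈ T, z p := by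
    funext z; exact encodedF_eq D m s α β z
  rw [this, walshCoeff_expansion]

end core

/-- Additive spectral decomposition: for every `k ≥ 1`,
`P_k = ∑_i P_k^{(i)} + ∑_{i<j} P_k^{(i,j)}`; moreover `P_k^{(i)} = 0` for `k > D_i`, and
`P_k^{(i,j)} = 0` for `k ≤ 1` or `k > D_i + D_j`. -/
theorem stmt17 {N : ℕ} (D m : Fin N → ℕ) (hm : ∀ i, m i ≤ 2 ^ D i)
    (s : ∀ i, Fin (m i) → Fin (D i) → ℝ)
    (hs : ∀ i c q, s i c q = 1 ∨ s i c q = -1)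
    (hinj : ∀ i, Function.Injective (s i))
    (α : ∀ i, Fin (m i) → ℝ) (β : ∀ i j, Fin (m i) → Fin (m j) → ℝ)
    (hrow : ∀ i j, i < j → ∀ ci : Fin (m i), ∑ cj : Fin (m j), β i j ci cj = 0)
    (hcol : ∀ i j, i < j → ∀ cj : Fin (m j), ∑ ci : Fin (m i), β i j ci cj = 0)
    (k : ℕ) (hk : 1 ≤ k) :
    (specPower D m s α β k =
      (∑ i : Fin N, unaryPower D m s α i k) +
        ∑ i : Fin N, ∑ j : Fin N,
          if i < j then pairPower D m s β i j k else 0) ∧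
    (∀ i : Fin N, D i < k → unaryPower D m s α i k = 0) ∧
    (∀ i j : Fin N, i < j → (k ≤ 1 ∨ D i + D j < k) → pairPower D m s β i j k = 0) := by
  refine ⟨?_, fun i h => unary_vanish D m s α i k h,
    fun i j _ h => pair_vanish D m s β i j k h⟩
  unfold specPower
  have h1 : ∀ S ∈ Finset.univ.filter
      (fun S : Finset ((i : Fin N) × Fin (D i)) => S.card = k),
      walshCoeff (encodedF D m s α β) S ^ 2
        = (∑ i : Fin N, if ∀ p ∈ S, p.1 = i then Acoef D m s α i (part D i S) ^ 2 else 0)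
          + ∑ i : Fin N, ∑ j : Fin N,
              if i < j then
                (if (∀ p ∈ S, p.1 = i ∨ p.1 = j) ∧ (part D i S).Nonempty ∧
                    (part D j S).Nonempty then
                  Bcoef D m s β i j (part D i S) (part D j S) ^ 2 else 0)
              else 0 := by
    intro S hS
    rw [Finset.mem_filter] at hS
    have hne : S.Nonempty := Finset.card_pos.mp (by omega)
    rw [walshCoeff_encodedF, WC_sq D m s α β hrow hcol S hne]
  rw [Finset.sum_congr rfl h1, Finset.sum_add_distrib]
  congr 1
  · rw [Finset.sum_comm]
    exact Finset.sum_congr rfl fun i _ => unary_sum D m s α i k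
  · rw [Finset.sum_comm]
    refine Finset.sum_congr rfl fun i _ => ?_
    rw [Finset.sum_comm]
    refine Finset.sum_congr rfl fun j _ => ?_
    by_cases hij : i < j
    · rw [if_pos hij, ← pair_sum D m s β hij k]
      exact Finset.sum_congr rfl fun S _ => if_pos hij
    · rw [if_neg hij]
      exact Finset.sum_eq_zero fun S _ => if_neg hij
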